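/- Let N be a commutative ℝ-algebra with unit and I an ideal of finite codimension s > 0. Let J be the intersection of all finite-codimensional maximal ideals of N containing I, and suppose I + Jⁿ = I + J^{n+1} for some n. Then Jⁿ ⊆ I, and hence J ⊆ √I (the radical of I). -/

import Mathlib

/-- Let `N` be a commutative unital `ℝ`-algebra and `I` an ideal of finite codimension
`s > 0`.  Let `J` be the intersection of all maximal finite-codimensional ideals of `N`
containing `I`, and suppose `I + Jⁿ = I + J^(n+1)` for some `n ≥ 1`.  Then `Jⁿ ⊆ I`, and
hence `J ⊆ √I`. -/
theorem stmt2 {N : Type*} [CommRing N] [Algebra ℝ N]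
    (I : Ideal N) [FiniteDimensional ℝ (N ⧸ I)]
    (hs : 0 < Module.finrank ℝ (N ⧸ I))
    (J : Ideal N)
    (hJ : J = sInf {m : Ideal N | m.IsMaximal ∧ I ≤ m ∧ FiniteDimensional ℝ (N ⧸ m)})
    (n : ℕ) (hn : 1 ≤ n)
    (hstab : I ⊔ J ^ n = I ⊔ J ^ (n + 1)) :
    J ^ n ≤ I ∧ J ≤ I.radical := by
  set R := N ⧸ I
  let π : N →+* R := Ideal.Quotient.mk I
  have hπ : Function.Surjective π := Ideal.Quotient.mk_surjective
  set K : Ideal R := J.map π with hK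
  -- K ≤ jacobson ⊥
  have hjac : K ≤ Ideal.jacobson (⊥ : Ideal R) := by
    rw [Ideal.jacobson, le_sInf_iff]
    rintro M ⟨-, hM⟩
    haveI : M.IsMaximal := hM
    have hm : (M.comap π).IsMaximal := Ideal.comap_isMaximal_of_surjective π hπ
    have hIm : I ≤ M.comap π := by
      intro x hx
      simp only [Ideal.mem_comap]
      have : π x = 0 := Ideal.Quotient.eq_zero_iff_mem.mpr hx
      simp [this]
    have hmap : (M.comap π).map (Ideal.Quotient.mkₐ ℝ I) = M := by
      have := Ideal.map_comap_of_surjective π hπ M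
      exact this
    haveI : FiniteDimensional ℝ (N ⧸ M.comap π) := by
      have e := DoubleQuot.quotQuotEquivQuotOfLEₐ ℝ hIm
      rw [hmap] at e
      haveI : FiniteDimensional ℝ ((N ⧸ I) ⧸ M) :=
        Module.Finite.of_surjective
          (Ideal.Quotient.mkₐ ℝ M).toLinearMap Ideal.Quotient.mk_surjective
      exact Module.Finite.equiv e.toLinearEquiv
    have hJM : J ≤ M.comap π := by
      rw [hJ]
      exact sInf_le ⟨hm, hIm, ‹_›⟩
    exact Ideal.map_le_iff_le_comap.mpr hJM
  -- K^n is f.g. since R is Noetherian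
  haveI : IsNoetherian ℝ R := inferInstance
  haveI : IsNoetherianRing R := isNoetherian_of_tower ℝ ‹IsNoetherian ℝ R›
  have hfg : (K ^ n).FG := IsNoetherian.noetherian _
  -- K^n ≤ K • K^n
  have hmapI : I.map π = ⊥ := Ideal.map_quotient_self I
  have hKn : K ^ n = K ^ (n + 1) := by
    have h1 : (I ⊔ J ^ n).map π = (I ⊔ J ^ (n + 1)).map π := by rw [hstab]
    rw [Ideal.map_sup, Ideal.map_sup, hmapI, bot_sup_eq, bot_sup_eq,
      Ideal.map_pow, Ideal.map_pow] at h1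
    exact h1
  have hle : (K ^ n : Ideal R) ≤ K • (K ^ n : Submodule R R) := by
    rw [smul_eq_mul, ← pow_succ']
    exact le_of_eq hKn
  have hbot : (K ^ n : Ideal R) = ⊥ :=
    Submodule.eq_bot_of_le_smul_of_le_jacobson_bot K _ hfg hle hjac
  have hJnI : J ^ n ≤ I := by
    intro x hx
    have : π x ∈ (J.map π) ^ n := by
      rw [← Ideal.map_pow]
      exact Ideal.mem_map_of_mem π hx
    rw [hbot] at this
    exact Ideal.Quotient.eq_zero_iff_mem.mp this
  refine ⟨hJnI, fun x hx => ?_⟩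
  exact ⟨n, hJnI (Ideal.pow_mem_pow hx n)⟩
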